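/- For every γ ∈ (1,2), the triple integral ∫₀^∞∫₀^∞∫₀^∞ (xyz)^{-γ-1}·min(xy,1)·min(xz,1)·min(yz,1) dx dy dz is finite. -/

import Mathlib

open MeasureTheory

namespace Stmt3Aux

open Set

lemma lintA {p a : ℝ} (hp : p < -1) (ha : 0 < a) :
    ∫⁻ y in Set.Ioi a, ENNReal.ofReal (y ^ p) ≤ ENNReal.ofReal (a ^ (p+1) / (-(p+1))) := by
  rw [← ofReal_integral_eq_lintegral_ofReal (integrableOn_Ioi_rpow_of_lt hp ha)
      ((ae_restrict_iff' measurableSet_Ioi).2 (ae_of_all _ fun y hy =>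
        Real.rpow_nonneg (le_of_lt (ha.trans hy)) p))]
  rw [integral_Ioi_rpow_of_lt hp ha]
  rw [div_neg, neg_div]

lemma lintB {p b : ℝ} (hp : -1 < p) (hb : 0 < b) :
    ∫⁻ y in Set.Ioc 0 b, ENNReal.ofReal (y ^ p) ≤ ENNReal.ofReal (b ^ (p+1) / (p+1)) := by
  have hint : IntegrableOn (fun y : ℝ => y ^ p) (Set.Ioc 0 b) :=
    (intervalIntegral.intervalIntegrable_rpow' hp (a := 0) (b := b)).1
  rw [← ofReal_integral_eq_lintegral_ofReal hint
      ((ae_restrict_iff' measurableSet_Ioc).2 (ae_of_all _ fun y hy =>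
        Real.rpow_nonneg (le_of_lt hy.1) p))]
  have h0 : ∫ y in Set.Ioc 0 b, y ^ p = ∫ y in (0:ℝ)..b, y ^ p :=
    (intervalIntegral.integral_of_le hb.le).symm
  rw [h0, integral_rpow (Or.inl hp), Real.zero_rpow (by linarith : p + 1 ≠ 0)]
  simp

lemma lint_cmul_Ioc {c p b : ℝ} (hc : 0 ≤ c) (hp : -1 < p) (hb : 0 < b) :
    ∫⁻ z in Set.Ioc 0 b, ENNReal.ofReal (c * z ^ p)
      ≤ ENNReal.ofReal (c * (b ^ (p+1) / (p+1))) := by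
  simp_rw [ENNReal.ofReal_mul hc]
  rw [lintegral_const_mul' _ _ ENNReal.ofReal_ne_top]
  exact mul_le_mul' le_rfl (lintB hp hb)

lemma lint_cmul_Ioi {c p a : ℝ} (hc : 0 ≤ c) (hp : p < -1) (ha : 0 < a) :
    ∫⁻ z in Set.Ioi a, ENNReal.ofReal (c * z ^ p)
      ≤ ENNReal.ofReal (c * (a ^ (p+1) / (-(p+1)))) := by
  simp_rw [ENNReal.ofReal_mul hc]
  rw [lintegral_const_mul' _ _ ENNReal.ofReal_ne_top]
  exact mul_le_mul' le_rfl (lintA hp ha)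

lemma min_le_rpow {u b : ℝ} (hu : 0 < u) (hb0 : 0 ≤ b) (hb1 : b ≤ 1) : min u 1 ≤ u ^ b := by
  rcases le_total u 1 with h | h
  · refine le_trans (min_le_left _ _) ?_
    calc u = u ^ (1:ℝ) := (Real.rpow_one u).symm
      _ ≤ u ^ b := Real.rpow_le_rpow_of_exponent_ge hu h hb1
  · exact le_trans (min_le_right _ _) (Real.one_le_rpow h hb0)

lemma combine {x K c D r p q : ℝ} (hx : 0 < x) (hKD : K / D ≤ c)
    (hr : p + (q+1) = r) :
    (K * x ^ p) * (x ^ (q+1) / D) ≤ c * x ^ r := by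
  have hx' : x ^ p * x ^ (q+1) = x ^ r := by rw [← Real.rpow_add hx, hr]
  have h0 : 0 ≤ x ^ r := Real.rpow_nonneg hx.le _
  calc (K * x ^ p) * (x ^ (q+1) / D) = (K/D) * (x ^ p * x ^ (q+1)) := by ring
    _ = (K/D) * x ^ r := by rw [hx']
    _ ≤ c * x ^ r := mul_le_mul_of_nonneg_right hKD h0

lemma masterA {x y : ℝ} (hx : 0 < x) (hy : 0 < y) (K a b e : ℝ) :
    (x*y) ^ a * (x*y) ^ b * (K * (y * x ^ e)) = (K * x ^ (a+b+e)) * y ^ (a+b+1) := by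
  rw [Real.mul_rpow hx.le hy.le, Real.mul_rpow hx.le hy.le,
      show a+b+e = a+(b+e) by ring, Real.rpow_add hx, Real.rpow_add hx,
      show a+b+1 = a+(b+1) by ring, Real.rpow_add hy, Real.rpow_add hy, Real.rpow_one]
  ring

lemma masterB {x y : ℝ} (hx : 0 < x) (hy : 0 < y) (K a b e : ℝ) :
    (x*y) ^ a * (x*y) ^ b * (K * (x * y ^ e)) = (K * x ^ (a+b+1)) * y ^ (a+b+e) := by
  rw [Real.mul_rpow hx.le hy.le, Real.mul_rpow hx.le hy.le,
      show a+b+1 = a+(b+1) by ring, Real.rpow_add hx, Real.rpow_add hx,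
      show a+b+e = a+(b+e) by ring, Real.rpow_add hy, Real.rpow_add hy, Real.rpow_one]
  ring

/-- The inner `z`-integral, asymmetric version (`x ≤ y`). -/
lemma lemZ' {γ x y : ℝ} (h1 : 1 < γ) (h2 : γ < 2) (hx : 0 < x) (hy : 0 < y) :
    ∫⁻ z in Set.Ioi (0:ℝ), ENNReal.ofReal (z ^ (-γ - 1) * min (x * z) 1 * min (y * z) 1)
      ≤ ENNReal.ofReal ((1/(2-γ) + 1/(γ-1)) * (x * y ^ (γ-1))) := by
  have h2γ : (0:ℝ) < 2 - γ := by linarith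
  have h1γ : (0:ℝ) < γ - 1 := by linarith
  have hyi : 0 < y⁻¹ := inv_pos.2 hy
  rw [← Set.Ioc_union_Ioi_eq_Ioi hyi.le]
  refine le_trans (lintegral_union_le _ _ _) ?_
  have hA : ∫⁻ z in Set.Ioc (0:ℝ) y⁻¹,
        ENNReal.ofReal (z ^ (-γ - 1) * min (x * z) 1 * min (y * z) 1)
      ≤ ENNReal.ofReal ((x*y) * ((y⁻¹) ^ ((1-γ)+1) / ((1-γ)+1))) := by
    refine le_trans (setLIntegral_mono' measurableSet_Ioc fun z hz => ?_)
      (lint_cmul_Ioc (by positivity) (by linarith) hyi)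
    apply ENNReal.ofReal_le_ofReal
    have hz0 : 0 < z := hz.1
    have e : z ^ (-γ - 1) * z * z = z ^ (1-γ) := by
      rw [← Real.rpow_add_one hz0.ne', ← Real.rpow_add_one hz0.ne']
      ring_nf
    calc z ^ (-γ - 1) * min (x*z) 1 * min (y*z) 1
        ≤ z ^ (-γ - 1) * (x*z) * (y*z) := by
          apply mul_le_mul
            (mul_le_mul_of_nonneg_left (min_le_left _ _) (Real.rpow_nonneg hz0.le _))
            (min_le_left _ _) (le_min (by positivity) zero_le_one) (by positivity)
      _ = (x*y) * z ^ (1-γ) := by rw [← e]; ring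
  have hB : ∫⁻ z in Set.Ioi y⁻¹,
        ENNReal.ofReal (z ^ (-γ - 1) * min (x * z) 1 * min (y * z) 1)
      ≤ ENNReal.ofReal (x * ((y⁻¹) ^ (-γ+1) / (-(-γ+1)))) := by
    refine le_trans (setLIntegral_mono' measurableSet_Ioi fun z hz => ?_)
      (lint_cmul_Ioi hx.le (by linarith : -γ < -1) hyi)
    apply ENNReal.ofReal_le_ofReal
    have hz0 : 0 < z := lt_trans hyi hz
    have e : z ^ (-γ - 1) * z = z ^ (-γ) := by
      rw [← Real.rpow_add_one hz0.ne']
      ring_nf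
    calc z ^ (-γ - 1) * min (x*z) 1 * min (y*z) 1
        ≤ z ^ (-γ - 1) * (x*z) * 1 := by
          apply mul_le_mul
            (mul_le_mul_of_nonneg_left (min_le_left _ _) (Real.rpow_nonneg hz0.le _))
            (min_le_right _ _) (le_min (by positivity) zero_le_one) (by positivity)
      _ = x * z ^ (-γ) := by rw [← e]; ring
  refine le_trans (add_le_add hA hB) ?_
  rw [← ENNReal.ofReal_add
      (mul_nonneg (by positivity)
        (div_nonneg (Real.rpow_nonneg hyi.le _) (by linarith)))
      (mul_nonneg hx.le
        (div_nonneg (Real.rpow_nonneg hyi.le _) (by linarith)))]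
  apply ENNReal.ofReal_le_ofReal
  have einv : ∀ s : ℝ, (y⁻¹) ^ s = y ^ (-s) := fun s => by
    rw [Real.inv_rpow hy.le, ← Real.rpow_neg hy.le]
  rw [einv, einv, show ((1-γ)+1 : ℝ) = 2-γ by ring, show (-(2-γ) : ℝ) = γ-2 by ring,
      show (-(-γ+1) : ℝ) = γ-1 by ring]
  apply le_of_eq
  have ey : y ^ (γ-2) * y = y ^ (γ-1) := by
    rw [← Real.rpow_add_one hy.ne']
    ring_nf
  linear_combination (x/(2-γ)) * ey

/-- The inner `z`-integral with min/max. -/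
lemma lemZ {γ x y : ℝ} (h1 : 1 < γ) (h2 : γ < 2) (hx : 0 < x) (hy : 0 < y) :
    ∫⁻ z in Set.Ioi (0:ℝ), ENNReal.ofReal (z ^ (-γ - 1) * min (x * z) 1 * min (y * z) 1)
      ≤ ENNReal.ofReal ((1/(2-γ) + 1/(γ-1)) * (min x y * max x y ^ (γ-1))) := by
  rcases le_total x y with h | h
  · rw [min_eq_left h, max_eq_right h]
    exact lemZ' h1 h2 hx hy
  · rw [min_eq_right h, max_eq_left h]
    have := lemZ' h1 h2 hy hx
    refine le_trans (le_of_eq (lintegral_congr fun z => ?_)) this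
    rw [mul_right_comm]

/-- The real-valued bound after integrating out `z`. -/
noncomputable def G (γ x y : ℝ) : ℝ :=
  ((x*y) ^ (-γ - 1) * min (x*y) 1) * ((1/(2-γ) + 1/(γ-1)) * (min x y * max x y ^ (γ-1)))

lemma lemYinner {γ x y : ℝ} (h1 : 1 < γ) (h2 : γ < 2) (hx : 0 < x) (hy : 0 < y) :
    ∫⁻ z in Set.Ioi (0:ℝ),
        ENNReal.ofReal ((x * y * z) ^ (-γ - 1) * min (x * y) 1 * min (x * z) 1 * min (y * z) 1)
      ≤ ENNReal.ofReal (G γ x y) := by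
  have hxy : 0 < x * y := mul_pos hx hy
  have hC : 0 ≤ (x*y) ^ (-γ - 1) * min (x*y) 1 :=
    mul_nonneg (Real.rpow_nonneg hxy.le _) (le_min hxy.le zero_le_one)
  have heq : ∀ z ∈ Set.Ioi (0:ℝ),
      ENNReal.ofReal ((x * y * z) ^ (-γ - 1) * min (x * y) 1 * min (x * z) 1 * min (y * z) 1)
        = ENNReal.ofReal ((x*y) ^ (-γ - 1) * min (x*y) 1)
          * ENNReal.ofReal (z ^ (-γ - 1) * min (x * z) 1 * min (y * z) 1) := by
    intro z hz
    rw [← ENNReal.ofReal_mul hC]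
    congr 1
    rw [Real.mul_rpow hxy.le (le_of_lt hz)]
    ring
  rw [setLIntegral_congr_fun measurableSet_Ioi heq,
      lintegral_const_mul' _ _ ENNReal.ofReal_ne_top]
  refine le_trans (mul_le_mul' le_rfl (lemZ h1 h2 hx hy)) ?_
  rw [← ENNReal.ofReal_mul hC]
  exact le_of_eq rfl

lemma lemY1 {γ x : ℝ} (h1 : 1 < γ) (h2 : γ < 2) (hx : 0 < x) (hx1 : x ≤ 1) :
    ∫⁻ y in Set.Ioi (0:ℝ), ENNReal.ofReal (G γ x y)
      ≤ ENNReal.ofReal (((1/(2-γ) + 1/(γ-1)) * (4/(2-γ))) * x ^ (1-γ))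
        + ENNReal.ofReal (((1/(2-γ) + 1/(γ-1)) * (4/(2-γ))) * x ^ (-(γ/2))) := by
  have h2γ : (0:ℝ) < 2 - γ := by linarith
  have h1γ : (0:ℝ) < γ - 1 := by linarith
  set K : ℝ := 1/(2-γ) + 1/(γ-1) with hKdef
  have hK : 0 < K := add_pos (div_pos one_pos h2γ) (div_pos one_pos h1γ)
  rw [← Set.Ioc_union_Ioi_eq_Ioi hx.le]
  refine le_trans (lintegral_union_le _ _ _) (add_le_add ?_ ?_)
  · -- y ∈ Ioc 0 x : use min(xy,1) ≤ (xy)^1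
    calc ∫⁻ y in Set.Ioc (0:ℝ) x, ENNReal.ofReal (G γ x y)
        ≤ ∫⁻ y in Set.Ioc (0:ℝ) x,
            ENNReal.ofReal ((K * x ^ (-γ-1+1+(γ-1))) * y ^ (-γ-1+1+1)) := by
          refine setLIntegral_mono' measurableSet_Ioc fun y hy => ?_
          apply ENNReal.ofReal_le_ofReal
          have hy0 : 0 < y := hy.1
          have hxy : 0 < x*y := mul_pos hx hy0
          rw [G, min_eq_right hy.2, max_eq_left hy.2]
          calc ((x*y) ^ (-γ - 1) * min (x*y) 1) * (K * (y * x ^ (γ-1)))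
              ≤ ((x*y) ^ (-γ - 1) * (x*y) ^ (1:ℝ)) * (K * (y * x ^ (γ-1))) := by
                apply mul_le_mul_of_nonneg_right
                  (mul_le_mul_of_nonneg_left (min_le_rpow hxy zero_le_one le_rfl)
                    (Real.rpow_nonneg hxy.le _))
                  (mul_nonneg hK.le (mul_nonneg hy0.le (Real.rpow_nonneg hx.le _)))
          _ = (K * x ^ (-γ-1+1+(γ-1))) * y ^ (-γ-1+1+1) :=
                masterA hx hy0 K (-γ-1) 1 (γ-1)
      _ ≤ ENNReal.ofReal ((K * x ^ (-γ-1+1+(γ-1))) * (x ^ ((-γ-1+1+1)+1) / ((-γ-1+1+1)+1))) :=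
          lint_cmul_Ioc (mul_nonneg hK.le (Real.rpow_nonneg hx.le _))
            (by linarith : (-1:ℝ) < -γ-1+1+1) hx
      _ ≤ ENNReal.ofReal ((K * (4/(2-γ))) * x ^ (1-γ)) := by
          apply ENNReal.ofReal_le_ofReal
          refine combine hx ?_ (by ring)
          rw [show (-γ-1+1+1 : ℝ)+1 = 2-γ by ring,
            show K*(4/(2-γ)) = 4*K/(2-γ) by ring]
          gcongr
          linarith
  · -- y ∈ Ioi x : use min(xy,1) ≤ (xy)^((γ+2)/4)
    calc ∫⁻ y in Set.Ioi x, ENNReal.ofReal (G γ x y)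
        ≤ ∫⁻ y in Set.Ioi x,
            ENNReal.ofReal ((K * x ^ (-γ-1+(γ+2)/4+1)) * y ^ (-γ-1+(γ+2)/4+(γ-1))) := by
          refine setLIntegral_mono' measurableSet_Ioi fun y hy => ?_
          apply ENNReal.ofReal_le_ofReal
          have hy0 : 0 < y := lt_trans hx hy
          have hxy : 0 < x*y := mul_pos hx hy0
          have hyx : x ≤ y := le_of_lt hy
          rw [G, min_eq_left hyx, max_eq_right hyx]
          calc ((x*y) ^ (-γ - 1) * min (x*y) 1) * (K * (x * y ^ (γ-1)))
              ≤ ((x*y) ^ (-γ - 1) * (x*y) ^ ((γ+2)/4)) * (K * (x * y ^ (γ-1))) := by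
                apply mul_le_mul_of_nonneg_right
                  (mul_le_mul_of_nonneg_left
                    (min_le_rpow hxy (by linarith) (by linarith))
                    (Real.rpow_nonneg hxy.le _))
                  (mul_nonneg hK.le (mul_nonneg hx.le (Real.rpow_nonneg hy0.le _)))
          _ = (K * x ^ (-γ-1+(γ+2)/4+1)) * y ^ (-γ-1+(γ+2)/4+(γ-1)) :=
                masterB hx hy0 K (-γ-1) ((γ+2)/4) (γ-1)
      _ ≤ ENNReal.ofReal ((K * x ^ (-γ-1+(γ+2)/4+1))
            * (x ^ ((-γ-1+(γ+2)/4+(γ-1))+1) / (-((-γ-1+(γ+2)/4+(γ-1))+1)))) :=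
          lint_cmul_Ioi (mul_nonneg hK.le (Real.rpow_nonneg hx.le _))
            (by linarith : (-γ-1+(γ+2)/4+(γ-1) : ℝ) < -1) hx
      _ ≤ ENNReal.ofReal ((K * (4/(2-γ))) * x ^ (-(γ/2))) := by
          apply ENNReal.ofReal_le_ofReal
          refine combine hx ?_ (by ring)
          rw [show (-(((-γ-1+(γ+2)/4+(γ-1)) : ℝ)+1)) = (2-γ)/4 by ring,
            div_div_eq_mul_div, show K*(4/(2-γ)) = K*4/(2-γ) by ring]

lemma lemY2 {γ x : ℝ} (h1 : 1 < γ) (h2 : γ < 2) (hx1 : 1 ≤ x) :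
    ∫⁻ y in Set.Ioi (0:ℝ), ENNReal.ofReal (G γ x y)
      ≤ ENNReal.ofReal (((1/(2-γ) + 1/(γ-1)) * (4/(2-γ))) * x ^ (γ/2-2))
        + ENNReal.ofReal (((1/(2-γ) + 1/(γ-1)) * (4/(2-γ))) * x ^ (-γ-1)) := by
  have h2γ : (0:ℝ) < 2 - γ := by linarith
  have h1γ : (0:ℝ) < γ - 1 := by linarith
  have hx : (0:ℝ) < x := lt_of_lt_of_le one_pos hx1
  set K : ℝ := 1/(2-γ) + 1/(γ-1) with hKdef
  have hK : 0 < K := add_pos (div_pos one_pos h2γ) (div_pos one_pos h1γ)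
  rw [← Set.Ioc_union_Ioi_eq_Ioi hx.le]
  refine le_trans (lintegral_union_le _ _ _) (add_le_add ?_ ?_)
  · -- y ∈ Ioc 0 x : use min(xy,1) ≤ (xy)^((3γ-2)/4)
    calc ∫⁻ y in Set.Ioc (0:ℝ) x, ENNReal.ofReal (G γ x y)
        ≤ ∫⁻ y in Set.Ioc (0:ℝ) x,
            ENNReal.ofReal ((K * x ^ (-γ-1+(3*γ-2)/4+(γ-1))) * y ^ (-γ-1+(3*γ-2)/4+1)) := by
          refine setLIntegral_mono' measurableSet_Ioc fun y hy => ?_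
          apply ENNReal.ofReal_le_ofReal
          have hy0 : 0 < y := hy.1
          have hxy : 0 < x*y := mul_pos hx hy0
          rw [G, min_eq_right hy.2, max_eq_left hy.2]
          calc ((x*y) ^ (-γ - 1) * min (x*y) 1) * (K * (y * x ^ (γ-1)))
              ≤ ((x*y) ^ (-γ - 1) * (x*y) ^ ((3*γ-2)/4)) * (K * (y * x ^ (γ-1))) := by
                apply mul_le_mul_of_nonneg_right
                  (mul_le_mul_of_nonneg_left
                    (min_le_rpow hxy (by linarith) (by linarith))
                    (Real.rpow_nonneg hxy.le _))
                  (mul_nonneg hK.le (mul_nonneg hy0.le (Real.rpow_nonneg hx.le _)))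
          _ = (K * x ^ (-γ-1+(3*γ-2)/4+(γ-1))) * y ^ (-γ-1+(3*γ-2)/4+1) :=
                masterA hx hy0 K (-γ-1) ((3*γ-2)/4) (γ-1)
      _ ≤ ENNReal.ofReal ((K * x ^ (-γ-1+(3*γ-2)/4+(γ-1)))
            * (x ^ ((-γ-1+(3*γ-2)/4+1)+1) / ((-γ-1+(3*γ-2)/4+1)+1))) :=
          lint_cmul_Ioc (mul_nonneg hK.le (Real.rpow_nonneg hx.le _))
            (by linarith : (-1:ℝ) < -γ-1+(3*γ-2)/4+1) hx
      _ ≤ ENNReal.ofReal ((K * (4/(2-γ))) * x ^ (γ/2-2)) := by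
          apply ENNReal.ofReal_le_ofReal
          refine combine hx ?_ (by ring)
          rw [show ((-γ-1+(3*γ-2)/4+1 : ℝ)+1) = (2-γ)/4 by ring,
            div_div_eq_mul_div, show K*(4/(2-γ)) = K*4/(2-γ) by ring]
  · -- y ∈ Ioi x : use min(xy,1) ≤ (xy)^0 = 1
    calc ∫⁻ y in Set.Ioi x, ENNReal.ofReal (G γ x y)
        ≤ ∫⁻ y in Set.Ioi x,
            ENNReal.ofReal ((K * x ^ (-γ-1+0+1)) * y ^ (-γ-1+0+(γ-1))) := by
          refine setLIntegral_mono' measurableSet_Ioi fun y hy => ?_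
          apply ENNReal.ofReal_le_ofReal
          have hy0 : 0 < y := lt_trans hx hy
          have hxy : 0 < x*y := mul_pos hx hy0
          have hyx : x ≤ y := le_of_lt hy
          rw [G, min_eq_left hyx, max_eq_right hyx]
          calc ((x*y) ^ (-γ - 1) * min (x*y) 1) * (K * (x * y ^ (γ-1)))
              ≤ ((x*y) ^ (-γ - 1) * (x*y) ^ (0:ℝ)) * (K * (x * y ^ (γ-1))) := by
                apply mul_le_mul_of_nonneg_right
                  (mul_le_mul_of_nonneg_left
                    (min_le_rpow hxy le_rfl zero_le_one)
                    (Real.rpow_nonneg hxy.le _))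
                  (mul_nonneg hK.le (mul_nonneg hx.le (Real.rpow_nonneg hy0.le _)))
          _ = (K * x ^ (-γ-1+0+1)) * y ^ (-γ-1+0+(γ-1)) :=
                masterB hx hy0 K (-γ-1) 0 (γ-1)
      _ ≤ ENNReal.ofReal ((K * x ^ (-γ-1+0+1))
            * (x ^ ((-γ-1+0+(γ-1))+1) / (-((-γ-1+0+(γ-1))+1)))) :=
          lint_cmul_Ioi (mul_nonneg hK.le (Real.rpow_nonneg hx.le _))
            (by linarith : (-γ-1+0+(γ-1) : ℝ) < -1) hx
      _ ≤ ENNReal.ofReal ((K * (4/(2-γ))) * x ^ (-γ-1)) := by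
          apply ENNReal.ofReal_le_ofReal
          refine combine hx ?_ (by ring)
          rw [show (-(((-γ-1+0+(γ-1)) : ℝ)+1)) = (1:ℝ) by ring, div_one,
            show K*(4/(2-γ)) = 4*K/(2-γ) by ring, le_div_iff₀ h2γ]
          nlinarith [mul_nonneg hK.le (by linarith : (0:ℝ) ≤ 2+γ)]

end Stmt3Aux

open Stmt3Aux in
theorem stmt3 (γ : ℝ) (h1 : 1 < γ) (h2 : γ < 2) :
    ∫⁻ x in Set.Ioi (0:ℝ), ∫⁻ y in Set.Ioi (0:ℝ), ∫⁻ z in Set.Ioi (0:ℝ),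
      ENNReal.ofReal ((x * y * z) ^ (-γ - 1) * min (x * y) 1 * min (x * z) 1 * min (y * z) 1)
      < ⊤ := by
  have h2γ : (0:ℝ) < 2 - γ := by linarith
  have h1γ : (0:ℝ) < γ - 1 := by linarith
  set c : ℝ := (1/(2-γ) + 1/(γ-1)) * (4/(2-γ)) with hcdef
  have hc : 0 ≤ c :=
    mul_nonneg (le_of_lt (add_pos (div_pos one_pos h2γ) (div_pos one_pos h1γ)))
      (le_of_lt (div_pos (by norm_num) h2γ))
  have key1 : ∀ x : ℝ, 0 < x → x ≤ 1 →
      (∫⁻ y in Set.Ioi (0:ℝ), ∫⁻ z in Set.Ioi (0:ℝ),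
        ENNReal.ofReal ((x * y * z) ^ (-γ - 1) * min (x * y) 1 * min (x * z) 1 * min (y * z) 1))
      ≤ ENNReal.ofReal (c * x ^ (1-γ)) + ENNReal.ofReal (c * x ^ (-(γ/2))) := by
    intro x hx hx1
    refine le_trans (setLIntegral_mono' measurableSet_Ioi fun y hy =>
      lemYinner h1 h2 hx hy) (lemY1 h1 h2 hx hx1)
  have key2 : ∀ x : ℝ, 1 ≤ x →
      (∫⁻ y in Set.Ioi (0:ℝ), ∫⁻ z in Set.Ioi (0:ℝ),
        ENNReal.ofReal ((x * y * z) ^ (-γ - 1) * min (x * y) 1 * min (x * z) 1 * min (y * z) 1))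
      ≤ ENNReal.ofReal (c * x ^ (γ/2-2)) + ENNReal.ofReal (c * x ^ (-γ-1)) := by
    intro x hx1
    have hx : (0:ℝ) < x := lt_of_lt_of_le one_pos hx1
    refine le_trans (setLIntegral_mono' measurableSet_Ioi fun y hy =>
      lemYinner h1 h2 hx hy) (lemY2 h1 h2 hx1)
  have hsp : (∫⁻ x in Set.Ioi (0:ℝ), ∫⁻ y in Set.Ioi (0:ℝ), ∫⁻ z in Set.Ioi (0:ℝ),
      ENNReal.ofReal ((x * y * z) ^ (-γ - 1) * min (x * y) 1 * min (x * z) 1 * min (y * z) 1))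
      = ∫⁻ x in Set.Ioc (0:ℝ) 1 ∪ Set.Ioi (1:ℝ), ∫⁻ y in Set.Ioi (0:ℝ),
        ∫⁻ z in Set.Ioi (0:ℝ),
      ENNReal.ofReal ((x * y * z) ^ (-γ - 1) * min (x * y) 1 * min (x * z) 1 * min (y * z) 1) := by
    rw [Set.Ioc_union_Ioi_eq_Ioi (zero_le_one : (0:ℝ) ≤ 1)]
  rw [hsp]
  refine lt_of_le_of_lt (lintegral_union_le _ _ _) (ENNReal.add_lt_top.2 ⟨?_, ?_⟩)
  · refine lt_of_le_of_lt (setLIntegral_mono' measurableSet_Ioc fun x hx =>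
      key1 x hx.1 hx.2) ?_
    rw [lintegral_add_left (by fun_prop)]
    refine ENNReal.add_lt_top.2 ⟨?_, ?_⟩
    · exact lt_of_le_of_lt (lint_cmul_Ioc hc (by linarith) one_pos) ENNReal.ofReal_lt_top
    · exact lt_of_le_of_lt (lint_cmul_Ioc hc (by linarith) one_pos) ENNReal.ofReal_lt_top
  · refine lt_of_le_of_lt (setLIntegral_mono' measurableSet_Ioi fun x hx =>
      key2 x (le_of_lt hx)) ?_
    rw [lintegral_add_left (by fun_prop)]
    refine ENNReal.add_lt_top.2 ⟨?_, ?_⟩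
    · exact lt_of_le_of_lt (lint_cmul_Ioi hc (by linarith) one_pos) ENNReal.ofReal_lt_top
    · exact lt_of_le_of_lt (lint_cmul_Ioi hc (by linarith) one_pos) ENNReal.ofReal_lt_top
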